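/- Let X and Y be elements of a Banach algebra and m a positive integer. Then e^{X+Y} - e^X = Σ_{k=1}^m ∫_{T_k} e^{α₀X} Y e^{α₁X} Y ⋯ e^{α_{k-1}X} Y e^{α_kX} dα + ∫_{T_{m+1}} e^{α₀X} Y ⋯ e^{α_mX} Y e^{α_{m+1}(X+Y)} dα, where T_k = {(α₀,…,α_k) : α_i ≥ 0, Σα_i = 1} is the standard simplex and dα denotes Lebesgue measure on it. -/

import Mathlib

open MeasureTheory

/-- The (open, coordinate) standard simplex `{α ∈ ℝ^k : αᵢ ≥ 0, Σ αᵢ ≤ 1}`, parametrizing the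
simplex `T_k = {(α₀,…,α_k) : αᵢ ≥ 0, Σ αᵢ = 1}` by its first `k` coordinates (the last
coordinate being `1 - Σ`); `dα` is then Lebesgue measure on this set. -/
def coordSimplex (k : ℕ) : Set (Fin k → ℝ) :=
  {α | (∀ i, 0 ≤ α i) ∧ ∑ i, α i ≤ 1}

section DuhamelAux
open NormedSpace

lemma isClosed_coordSimplex (k : ℕ) : IsClosed (coordSimplex k) := by
  have h1 : IsClosed {α : Fin k → ℝ | ∀ i, 0 ≤ α i} := by
    have : {α : Fin k → ℝ | ∀ i, 0 ≤ α i} = ⋂ i, {α | 0 ≤ α i} := by ext; simp [Set.mem_iInter]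
    rw [this]
    exact isClosed_iInter fun i => isClosed_le continuous_const (continuous_apply i)
  have h2 : IsClosed {α : Fin k → ℝ | ∑ i, α i ≤ 1} :=
    isClosed_le (continuous_finset_sum _ fun i _ => continuous_apply i) continuous_const
  exact h1.inter h2

lemma measurableSet_coordSimplex (k : ℕ) : MeasurableSet (coordSimplex k) :=
  (isClosed_coordSimplex k).measurableSet

lemma isCompact_coordSimplex (k : ℕ) : IsCompact (coordSimplex k) := by
  refine (isCompact_Icc (a := (0 : Fin k → ℝ)) (b := 1)).of_isClosed_subset
    (isClosed_coordSimplex k) ?_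
  rintro α ⟨h1, h2⟩
  refine Set.mem_Icc.mpr ⟨fun i => h1 i, fun i => ?_⟩
  calc α i ≤ ∑ j, α j := Finset.single_le_sum (fun j _ => h1 j) (Finset.mem_univ i)
  _ ≤ 1 := h2

variable {A : Type*} [NormedRing A] [NormedAlgebra ℝ A] [CompleteSpace A]

lemma cont_P (X Y : A) (k : ℕ) :
    Continuous fun α : Fin k → ℝ => (List.ofFn fun i => exp (α i • X) * Y).prod := by
  simp only [List.ofFn_eq_map]
  exact continuous_list_prod _ fun i _ =>
    ((letI : NormedAlgebra ℚ A := NormedAlgebra.restrictScalars ℚ ℝ A; exp_continuous).comp ((continuous_apply i).smul continuous_const)).mul continuous_const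

lemma cont_F (X Y W : A) (k : ℕ) :
    Continuous fun α : Fin k → ℝ =>
      (List.ofFn fun i => exp (α i • X) * Y).prod * exp ((1 - ∑ i, α i) • W) :=
  (cont_P X Y k).mul ((letI : NormedAlgebra ℚ A := NormedAlgebra.restrictScalars ℚ ℝ A; exp_continuous).comp
    (((continuous_const.sub (continuous_finset_sum _ fun i _ => continuous_apply i))).smul
      continuous_const))

theorem duhamel_base (X Y : A) (t : ℝ) :
    exp (t • (X + Y)) = exp (t • X) +
      ∫ s in (0:ℝ)..t, exp (s • X) * Y * exp ((t - s) • (X + Y)) := by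
  set Z := X + Y with hZ
  set g : ℝ → A := fun s => exp (s • X) * Y * exp ((t - s) • Z) with hg
  have hexp : Continuous (exp : A → A) := (letI : NormedAlgebra ℚ A := NormedAlgebra.restrictScalars ℚ ℝ A; exp_continuous)
  have hgcont : Continuous g := by
    apply Continuous.mul
    · exact ((hexp.comp (continuous_id.smul continuous_const)).mul continuous_const)
    · exact hexp.comp ((continuous_const.sub continuous_id).smul continuous_const)
  have hderiv : ∀ s : ℝ, HasDerivAt (fun s => exp (s • X) * exp ((t - s) • Z)) (-(g s)) s := by
    intro s
    have h1 : HasDerivAt (fun s : ℝ => exp (s • X)) (exp (s • X) * X) s :=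
      hasDerivAt_exp_smul_const X s
    have hinner : HasDerivAt (fun s : ℝ => t - s) (-1) s := by
      simpa using (hasDerivAt_id s).const_sub t
    have h2' : HasDerivAt (fun u : ℝ => exp (u • Z)) (Z * exp ((t - s) • Z)) (t - s) :=
      hasDerivAt_exp_smul_const' Z (t - s)
    have h2 : HasDerivAt (fun s : ℝ => exp ((t - s) • Z))
        ((-1 : ℝ) • (Z * exp ((t - s) • Z))) s := h2'.scomp s hinner
    have : HasDerivAt (fun s => exp (s • X) * exp ((t - s) • Z)) _ s := h1.mul h2
    convert this using 1
    rw [hg, hZ]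
    simp only [neg_one_smul]
    noncomm_ring
  have key := intervalIntegral.integral_eq_sub_of_hasDerivAt
    (f := fun s => exp (s • X) * exp ((t - s) • Z)) (f' := fun s => -(g s))
    (fun s _ => hderiv s) (hgcont.neg.intervalIntegrable 0 t)
  rw [intervalIntegral.integral_neg] at key
  have h0 : (0:ℝ) • X = 0 := zero_smul _ _
  simp only [sub_self, sub_zero, h0, zero_smul, exp_zero, mul_one, one_mul] at key
  have : ∫ s in (0:ℝ)..t, g s = exp (t • Z) - exp (t • X) := by
    have h2 := neg_eq_iff_eq_neg.mp key
    rw [neg_sub] at h2; exact h2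
  rw [hg] at this
  rw [this]; abel

theorem Rstep (X Y : A) (k : ℕ) :
    (∫ α in coordSimplex k,
        (List.ofFn fun i : Fin k => exp (α i • X) * Y).prod *
          exp ((1 - ∑ i, α i) • (X + Y)) ∂volume) =
    (∫ α in coordSimplex k,
        (List.ofFn fun i : Fin k => exp (α i • X) * Y).prod *
          exp ((1 - ∑ i, α i) • X) ∂volume) +
    ∫ α in coordSimplex (k + 1),
        (List.ofFn fun i : Fin (k + 1) => exp (α i • X) * Y).prod *
          exp ((1 - ∑ i, α i) • (X + Y)) ∂volume := by
  set Z := X + Y with hZ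
  set F : (Fin (k+1) → ℝ) → A := fun β =>
    (List.ofFn fun i : Fin (k+1) => exp (β i • X) * Y).prod * exp ((1 - ∑ i, β i) • Z)
    with hF
  set G : ℝ × (Fin k → ℝ) → A := fun p =>
    ((List.ofFn fun i : Fin k => exp (p.2 i • X) * Y).prod * (exp (p.1 • X) * Y)) *
      exp ((1 - ∑ i, p.2 i - p.1) • Z) with hG
  set T' : Set (ℝ × (Fin k → ℝ)) :=
    {p | 0 ≤ p.1 ∧ (∀ i, 0 ≤ p.2 i) ∧ p.1 + ∑ i, p.2 i ≤ 1} with hT'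
  set e := MeasurableEquiv.piFinSuccAbove (fun _ : Fin (k+1) => ℝ) (Fin.last k) with he
  -- G is F composed with snoc
  have hsnoc : ∀ p : ℝ × (Fin k → ℝ), e.symm p = Fin.snoc p.2 p.1 := by
    intro p
    simp [he, MeasurableEquiv.piFinSuccAbove, Fin.insertNthEquiv, Fin.insertNth_last', Fin.init]
  have hGF : ∀ p : ℝ × (Fin k → ℝ), F (e.symm p) = G p := by
    rintro ⟨s, α⟩
    rw [hsnoc]
    simp only [hF, hG]
    rw [List.ofFn_succ']
    simp only [Fin.snoc_castSucc, Fin.snoc_last, List.prod_concat, Fin.sum_univ_castSucc]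
    rw [show (1 : ℝ) - (∑ i : Fin k, α i + s) = 1 - ∑ i : Fin k, α i - s by ring]
  -- the simplex is the preimage of T'
  have hT : coordSimplex (k+1) = e ⁻¹' T' := by
    ext β
    have happ : e β = (β (Fin.last k), fun j : Fin k => β j.castSucc) := by
      simp only [he, MeasurableEquiv.piFinSuccAbove, MeasurableEquiv.coe_mk,
        Equiv.symm_symm, Fin.insertNthEquiv, Equiv.coe_fn_mk, Equiv.coe_fn_symm_mk, Fin.removeNth,
        Fin.succAbove_last]
      exact Prod.ext rfl (funext fun j => congrArg β (Fin.succAbove_last_apply j))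
    constructor
    · rintro ⟨h1, h2⟩
      refine Set.mem_preimage.mpr ?_
      rw [happ]
      simp only [hT', Set.mem_setOf_eq]
      refine ⟨h1 _, fun i => h1 _, ?_⟩
      rw [show β (Fin.last k) + ∑ i : Fin k, β i.castSucc = ∑ i, β i by
          rw [Fin.sum_univ_castSucc]; ring]
      exact h2
    · rintro hmem
      rw [Set.mem_preimage, happ] at hmem
      obtain ⟨h1, h2, h3⟩ := hmem
      refine ⟨fun i => ?_, ?_⟩
      · induction i using Fin.lastCases with
        | last => exact h1
        | cast i => exact h2 i
      · rw [Fin.sum_univ_castSucc]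
        linarith
  -- compactness / measurability of T'
  have hT'closed : IsClosed T' := by
    have h1 : IsClosed {p : ℝ × (Fin k → ℝ) | 0 ≤ p.1} :=
      isClosed_le continuous_const continuous_fst
    have h2 : IsClosed {p : ℝ × (Fin k → ℝ) | ∀ i, 0 ≤ p.2 i} := by
      have : {p : ℝ × (Fin k → ℝ) | ∀ i, 0 ≤ p.2 i} = ⋂ i, {p | 0 ≤ p.2 i} := by
        ext; simp [Set.mem_iInter]
      rw [this]
      exact isClosed_iInter fun i =>
        isClosed_le continuous_const ((continuous_apply i).comp continuous_snd)
    have h3 : IsClosed {p : ℝ × (Fin k → ℝ) | p.1 + ∑ i, p.2 i ≤ 1} :=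
      isClosed_le (continuous_fst.add
        (continuous_finset_sum _ fun i _ => (continuous_apply i).comp continuous_snd))
        continuous_const
    exact (h1.inter (h2.inter h3))
  have hT'meas : MeasurableSet T' := hT'closed.measurableSet
  have hT'compact : IsCompact T' := by
    refine (isCompact_Icc (a := ((0:ℝ), (0 : Fin k → ℝ))) (b := (1, 1))).of_isClosed_subset
      hT'closed ?_
    rintro ⟨s, α⟩ ⟨h1, h2, h3⟩
    have hsum : 0 ≤ ∑ i, α i := Finset.sum_nonneg fun i _ => h2 i
    refine Set.mem_Icc.mpr ⟨⟨h1, fun i => h2 i⟩, ⟨by dsimp; linarith, fun i => ?_⟩⟩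
    have : α i ≤ ∑ j, α j := Finset.single_le_sum (fun j _ => h2 j) (Finset.mem_univ i)
    dsimp
    linarith
  -- continuity and integrability
  have hGcont : Continuous G := by
    refine Continuous.mul (Continuous.mul ?_ ?_) ?_
    · exact (cont_P X Y k).comp continuous_snd
    · exact ((letI : NormedAlgebra ℚ A := NormedAlgebra.restrictScalars ℚ ℝ A; exp_continuous).comp (continuous_fst.smul continuous_const)).mul continuous_const
    · refine (letI : NormedAlgebra ℚ A := NormedAlgebra.restrictScalars ℚ ℝ A; exp_continuous).comp (Continuous.smul ?_ continuous_const)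
      exact (continuous_const.sub
        (continuous_finset_sum _ fun i _ => (continuous_apply i).comp continuous_snd)).sub
        continuous_fst
  have hInd : Integrable (T'.indicator G) (volume.prod volume) := by
    rw [← Measure.volume_eq_prod]
    exact (hGcont.continuousOn.integrableOn_compact hT'compact).integrable_indicator hT'meas
  have hmp := volume_preserving_piFinSuccAbove (fun _ : Fin (k+1) => ℝ) (Fin.last k)
  have hemb := e.measurableEmbedding
  have step1 : (∫ β in coordSimplex (k+1), F β) = ∫ p in T', G p := by
    have h2 : F = fun β => G (e β) :=
      funext fun β => by rw [← hGF (e β), e.symm_apply_apply]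
    rw [hT, h2]
    exact hmp.setIntegral_preimage_emb hemb G T'
  have h_inner_zero : ∀ α, α ∉ coordSimplex k → (∫ s, T'.indicator G (s, α)) = 0 := by
    intro α hα
    have hz : ∀ s : ℝ, T'.indicator G (s, α) = 0 := by
      intro s
      apply Set.indicator_of_notMem
      rintro ⟨hs1, hs2, hs3⟩
      refine hα ⟨hs2, ?_⟩
      have : (0:ℝ) ≤ s := hs1
      simp only at hs3
      linarith
    simp only [hz, integral_zero]
  have h_inner_on : ∀ α ∈ coordSimplex k,
      (∫ s, T'.indicator G (s, α)) = ∫ s in Set.Icc 0 (1 - ∑ i, α i), G (s, α) := by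
    intro α hα
    have hiff : ∀ s : ℝ, ((s, α) ∈ T') ↔ s ∈ Set.Icc (0:ℝ) (1 - ∑ i, α i) := by
      intro s
      constructor
      · rintro ⟨h1, _, h3⟩
        simp only at h3
        exact ⟨h1, by linarith⟩
      · rintro ⟨h1, h2⟩
        exact ⟨h1, hα.1, by simp only; linarith⟩
    have hcong : ∀ s : ℝ, T'.indicator G (s, α)
        = (Set.Icc (0:ℝ) (1 - ∑ i, α i)).indicator (fun s => G (s, α)) s := by
      intro s
      simp only [Set.indicator_apply]
      exact if_congr (hiff s) rfl rfl
    rw [integral_congr_ae (Filter.Eventually.of_forall hcong)]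
    exact integral_indicator measurableSet_Icc
  have hR1 : (∫ β in coordSimplex (k+1), F β)
      = ∫ α in coordSimplex k, ∫ s in Set.Icc 0 (1 - ∑ i, α i), G (s, α) := by
    rw [step1, ← integral_indicator hT'meas, Measure.volume_eq_prod,
      integral_prod_symm _ hInd,
      ← setIntegral_eq_integral_of_forall_compl_eq_zero h_inner_zero]
    exact setIntegral_congr_fun (measurableSet_coordSimplex k) h_inner_on
  have hpt : ∀ α ∈ coordSimplex k,
      (List.ofFn fun i : Fin k => exp (α i • X) * Y).prod * exp ((1 - ∑ i, α i) • Z)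
        = (List.ofFn fun i : Fin k => exp (α i • X) * Y).prod * exp ((1 - ∑ i, α i) • X)
          + ∫ s in Set.Icc 0 (1 - ∑ i, α i), G (s, α) := by
    intro α hα
    set t := 1 - ∑ i, α i with ht
    have ht0 : 0 ≤ t := by
      have := hα.2
      rw [ht]; linarith
    set P := (List.ofFn fun i : Fin k => exp (α i • X) * Y).prod with hP
    have hgcont : Continuous fun s : ℝ => exp (s • X) * Y * exp ((t - s) • Z) := by
      apply Continuous.mul
      · exact ((letI : NormedAlgebra ℚ A := NormedAlgebra.restrictScalars ℚ ℝ A; exp_continuous).comp (continuous_id.smul continuous_const)).mul continuous_const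
      · exact (letI : NormedAlgebra ℚ A := NormedAlgebra.restrictScalars ℚ ℝ A; exp_continuous).comp ((continuous_const.sub continuous_id).smul continuous_const)
    have hint : IntervalIntegrable (fun s : ℝ => exp (s • X) * Y * exp ((t - s) • Z))
        volume 0 t := hgcont.intervalIntegrable 0 t
    have hd := duhamel_base X Y t
    rw [← hZ] at hd
    calc P * exp (t • Z)
        = P * exp (t • X) + P * ∫ s in (0:ℝ)..t, exp (s • X) * Y * exp ((t - s) • Z) := by
          rw [hd, mul_add]
      _ = P * exp (t • X)
          + ∫ s in (0:ℝ)..t, P * (exp (s • X) * Y * exp ((t - s) • Z)) := by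
          congr 1
          have := (ContinuousLinearMap.mul ℝ A P).intervalIntegral_comp_comm hint
          simp only [ContinuousLinearMap.mul_apply'] at this
          exact this.symm
      _ = P * exp (t • X) + ∫ s in Set.Icc 0 t, G (s, α) := by
          rw [intervalIntegral.integral_of_le ht0, ← integral_Icc_eq_integral_Ioc]
          congr 1
          refine setIntegral_congr_fun measurableSet_Icc fun s hs => ?_
          simp only [hG, ← ht, hP]
          noncomm_ring
  have hf1int : IntegrableOn (fun α : Fin k → ℝ =>
      (List.ofFn fun i : Fin k => exp (α i • X) * Y).prod * exp ((1 - ∑ i, α i) • X))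
      (coordSimplex k) volume :=
    (cont_F X Y X k).continuousOn.integrableOn_compact (isCompact_coordSimplex k)
  have hhint : Integrable (fun α : Fin k → ℝ => ∫ s, T'.indicator G (s, α)) volume :=
    hInd.integral_prod_right
  have hf2int : IntegrableOn (fun α : Fin k → ℝ => ∫ s in Set.Icc 0 (1 - ∑ i, α i), G (s, α))
      (coordSimplex k) volume :=
    hhint.integrableOn.congr_fun h_inner_on (measurableSet_coordSimplex k)
  calc (∫ α in coordSimplex k,
        (List.ofFn fun i : Fin k => exp (α i • X) * Y).prod *
          exp ((1 - ∑ i, α i) • Z) ∂volume)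
      = ∫ α in coordSimplex k,
          ((List.ofFn fun i : Fin k => exp (α i • X) * Y).prod *
            exp ((1 - ∑ i, α i) • X)
          + ∫ s in Set.Icc 0 (1 - ∑ i, α i), G (s, α)) ∂volume :=
        setIntegral_congr_fun (measurableSet_coordSimplex k) hpt
    _ = (∫ α in coordSimplex k,
          (List.ofFn fun i : Fin k => exp (α i • X) * Y).prod *
            exp ((1 - ∑ i, α i) • X) ∂volume)
        + ∫ α in coordSimplex k, ∫ s in Set.Icc 0 (1 - ∑ i, α i), G (s, α) ∂volume :=
        integral_add hf1int hf2int
    _ = _ := by rw [← hR1]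

lemma R_zero (X Y W : A) :
    (∫ α in coordSimplex 0,
        (List.ofFn fun i : Fin 0 => exp (α i • X) * Y).prod *
          exp ((1 - ∑ i, α i) • W) ∂volume) = exp W := by
  have huniv : coordSimplex 0 = Set.univ := by
    ext α; simp [coordSimplex]
  rw [huniv, Measure.restrict_univ]
  simp only [List.ofFn_zero, List.prod_nil, Finset.univ_eq_empty, Finset.sum_empty, sub_zero,
    one_mul, one_smul]
  rw [integral_const]
  have h1 : (volume : Measure (Fin 0 → ℝ)).real Set.univ = 1 := by
    rw [measureReal_def, volume_pi, Measure.pi_univ]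
    simp
  rw [h1]
  simp

theorem duhamel_exp_expansion' (X Y : A) (m : ℕ) (hm : 1 ≤ m) :
    exp (X + Y) - exp X =
      (∑ k ∈ Finset.Icc 1 m,
        ∫ α in coordSimplex k,
          (List.ofFn fun i : Fin k => exp (α i • X) * Y).prod *
            exp ((1 - ∑ i, α i) • X) ∂volume) +
      ∫ α in coordSimplex (m + 1),
        (List.ofFn fun i : Fin (m + 1) => exp (α i • X) * Y).prod *
          exp ((1 - ∑ i, α i) • (X + Y)) ∂volume := by
  induction m with
  | zero => omega
  | succ n ih =>
    rcases Nat.eq_zero_or_pos n with hn | hn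
    · subst hn
      have h0 := Rstep X Y 0
      rw [R_zero X Y (X + Y), R_zero X Y X] at h0
      have h1 := Rstep X Y 1
      rw [show exp (X + Y) = exp X + _ from h0, h1]
      simp only [Finset.Icc_self, Finset.sum_singleton]
      abel
    · have hgoal := ih hn
      rw [Finset.sum_Icc_succ_top (by omega : 1 ≤ n + 1), hgoal, Rstep X Y (n + 1)]
      abel

end DuhamelAux

/-- **Iterated Duhamel expansion.** For elements `X Y` of a Banach algebra and `m ≥ 1`,
`e^{X+Y} - e^X = Σ_{k=1}^m ∫_{T_k} e^{α₀X} Y e^{α₁X} Y ⋯ Y e^{α_kX} dα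
  + ∫_{T_{m+1}} e^{α₀X} Y ⋯ e^{α_mX} Y e^{α_{m+1}(X+Y)} dα`. -/
theorem duhamel_exp_expansion {A : Type*} [NormedRing A] [NormedAlgebra ℝ A]
    [CompleteSpace A] (X Y : A) (m : ℕ) (hm : 1 ≤ m) :
    NormedSpace.exp (X + Y) - NormedSpace.exp X =
      (∑ k ∈ Finset.Icc 1 m,
        ∫ α in coordSimplex k,
          (List.ofFn fun i : Fin k => NormedSpace.exp (α i • X) * Y).prod *
            NormedSpace.exp ((1 - ∑ i, α i) • X) ∂volume) +
      ∫ α in coordSimplex (m + 1),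
        (List.ofFn fun i : Fin (m + 1) => NormedSpace.exp (α i • X) * Y).prod *
          NormedSpace.exp ((1 - ∑ i, α i) • (X + Y)) ∂volume :=
  duhamel_exp_expansion' X Y m hm
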